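/- Consider the left-invariant metric ⟨x,y⟩ = B(Ax,y) on Spin(3), identified with the unit quaternions, where B(x,y) = −trace(xy) on so(3) ≅ Im(ℍ), and A is the symmetric endomorphism with Ai = 2i, Aj = sj, Ak = tk (s,t > 0). Then the right-invariant Killing field I : g ↦ ig satisfies (∇I)₁ = 0 (is a transvection at the identity) if and only if s + t = 2. -/

import Mathlib

open Quaternion

/-- The quaternion `i`. -/
def iq : Quaternion ℝ := ⟨0, 1, 0, 0⟩

def qmk (a b c d : ℝ) : Quaternion ℝ := ⟨a, b, c, d⟩

theorem qlit (a b c d : ℝ) : (⟨a, b, c, d⟩ : Quaternion ℝ) = qmk a b c d := rfl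

@[simp] theorem qmk_re (a b c d : ℝ) : (qmk a b c d).re = a := rfl
@[simp] theorem qmk_imI (a b c d : ℝ) : (qmk a b c d).imI = b := rfl
@[simp] theorem qmk_imJ (a b c d : ℝ) : (qmk a b c d).imJ = c := rfl
@[simp] theorem qmk_imK (a b c d : ℝ) : (qmk a b c d).imK = d := rfl

/-- On `Spin(3)`, identified with the unit quaternions (so that
`so(3) ≅ Im ℍ` with Killing-field bracket `[x,y]₁ = yx - xy`), consider the left-invariant
metric `⟨x,y⟩ = B(Ax, y)` where `B(x,y) = -re(xy)` (proportional to `-trace(xy)` on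
`so(3)`, normalized so that `B(i,i) = 2` for `Ai = 2i`) and `A` is the symmetric
endomorphism with `Ai = 2i`, `Aj = sj`, `Ak = tk`, `s, t > 0`.  Then the right-invariant
Killing field `I : g ↦ ig` is a transvection at the identity, `(∇I)₁ = 0` — equivalently,
by the Koszul formula for Killing fields, `⟨[X,I],Y⟩ + ⟨[X,Y],I⟩ + ⟨[I,Y],X⟩ = 0` at `1`
for all Killing fields `X, Y` with imaginary values `x, y` — if and only if `s + t = 2`. -/
theorem stmt13 (s t : ℝ) (hs : 0 < s) (ht : 0 < t)
    (A : Quaternion ℝ → Quaternion ℝ)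
    (hA : ∀ x : Quaternion ℝ, A x = ⟨x.re, 2 * x.imI, s * x.imJ, t * x.imK⟩)
    (g : Quaternion ℝ → Quaternion ℝ → ℝ)
    (hg : ∀ x y : Quaternion ℝ, g x y = -((A x) * y).re) :
    (∀ x y : Quaternion ℝ, x.re = 0 → y.re = 0 →
        g (iq * x - x * iq) y + g (y * x - x * y) iq + g (y * iq - iq * y) x = 0)
      ↔ s + t = 2 := by
  constructor
  · intro h
    have h2 := h ⟨0,0,1,0⟩ ⟨0,0,0,1⟩ rfl rfl
    simp only [hg, hA, iq, Quaternion.re_mul, Quaternion.imI_mul, Quaternion.imJ_mul,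
      Quaternion.imK_mul, Quaternion.re_sub, Quaternion.imI_sub, Quaternion.imJ_sub,
      Quaternion.imK_sub, qlit, qmk_re, qmk_imI, qmk_imJ, qmk_imK] at h2
    norm_num at h2
    linarith
  · intro h x y hx hy
    simp only [hg, hA, iq, Quaternion.re_mul, Quaternion.imI_mul, Quaternion.imJ_mul,
      Quaternion.imK_mul, Quaternion.re_sub, Quaternion.imI_sub, Quaternion.imJ_sub,
      Quaternion.imK_sub, qlit, qmk_re, qmk_imI, qmk_imJ, qmk_imK, hx, hy]
    ring_nf
    linear_combination (2*x.imJ*y.imK - 2*x.imK*y.imJ) * h
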